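/- Let X be a finite-dimensional normed space of dimension ≥ 2, C ⊆ X a convex body, and x ∈ X \ C such that the cone c(x,C) is closed. Set Γ_C(x) = ∂[c(x,C)] ∩ C. Then for every y ∈ ∂C \ conv(Γ_C(x) ∪ {x}), the point x belongs to K(y,C), the intersection of all closed half-spaces [g ≤ g(y)] over norm-one functionals g supporting C at y. -/

import Mathlib

/-- The cone with vertex `z` generated by `E`: `z + ℝ₊ · (E - z)`. -/
def vertexCone {X : Type*} [NormedAddCommGroup X] [NormedSpace ℝ X]
    (z : X) (E : Set X) : Set X :=
  {x : X | ∃ t : ℝ, 0 ≤ t ∧ ∃ c ∈ E, x = z + t • (c - z)}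

/-- `K(y,B)`: the intersection of all closed half-spaces `[g ≤ g y]` over norm-one
functionals `g` supporting `B` at `y`. -/
def Kset {X : Type*} [NormedAddCommGroup X] [NormedSpace ℝ X]
    (B : Set X) (y : X) : Set X :=
  ⋂ g ∈ {g : X →L[ℝ] ℝ | ‖g‖ = 1 ∧ ∀ z ∈ B, g z ≤ g y}, {z : X | g z ≤ g y}

section Aux

variable {X : Type*} [NormedAddCommGroup X] [NormedSpace ℝ X]

lemma vertexCone_convex (x : X) {C : Set X} (hC : Convex ℝ C) :
    Convex ℝ (vertexCone x C) := by
  rintro p ⟨t₁, ht₁, c₁, hc₁, rfl⟩ q ⟨t₂, ht₂, c₂, hc₂, rfl⟩ a b ha hb hab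
  have hT : 0 ≤ a * t₁ + b * t₂ := by positivity
  rcases eq_or_lt_of_le hT with hT0 | hT0
  · have h1 : a * t₁ = 0 := by nlinarith [mul_nonneg ha ht₁, mul_nonneg hb ht₂]
    have h2 : b * t₂ = 0 := by nlinarith [mul_nonneg ha ht₁, mul_nonneg hb ht₂]
    refine ⟨0, le_refl 0, c₁, hc₁, ?_⟩
    have h3 : a • (x + t₁ • (c₁ - x)) + b • (x + t₂ • (c₂ - x))
        = (a + b) • x + (a * t₁) • (c₁ - x) + (b * t₂) • (c₂ - x) := by module
    rw [h3, h1, h2, hab]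
    simp
  · set T := a * t₁ + b * t₂ with hTdef
    have hTne : T ≠ 0 := ne_of_gt hT0
    refine ⟨T, le_of_lt hT0, (a * t₁ / T) • c₁ + (b * t₂ / T) • c₂,
      hC hc₁ hc₂ (div_nonneg (mul_nonneg ha ht₁) hT) (div_nonneg (mul_nonneg hb ht₂) hT)
        (by field_simp; linarith), ?_⟩
    match_scalars
    · field_simp; linarith
    · field_simp
    · field_simp

/-- scaling along the cone -/
lemma vertexCone_scale (x : X) {C : Set X} {k : X} (hk : k ∈ vertexCone x C)
    {l : ℝ} (hl : 0 ≤ l) : x + l • (k - x) ∈ vertexCone x C := by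
  obtain ⟨t, ht, c, hc, rfl⟩ := hk
  exact ⟨l * t, mul_nonneg hl ht, c, hc, by module⟩

end Aux

theorem stmt_10 {X : Type*} [NormedAddCommGroup X] [NormedSpace ℝ X]
    [FiniteDimensional ℝ X] (hd : 2 ≤ Module.finrank ℝ X)
    (C : Set X) (hclosed : IsClosed C) (hconv : Convex ℝ C) (hne : C ≠ Set.univ)
    (hint : (interior C).Nonempty)
    (x : X) (hx : x ∉ C) (hcone : IsClosed (vertexCone x C)) :
    ∀ y ∈ frontier C \ convexHull ℝ ((frontier (vertexCone x C) ∩ C) ∪ {x}),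
      x ∈ Kset C y := by
  intro y hy
  obtain ⟨hyF, hyNC⟩ := hy
  have hyC : y ∈ C := hclosed.frontier_subset hyF
  rw [Kset, Set.mem_iInter₂]
  rintro g ⟨hg1, hg2⟩
  simp only [Set.mem_setOf_eq]
  by_contra hgx
  push_neg at hgx   -- hgx : g y < g x
  set K := vertexCone x C with hKdef
  have hKconv : Convex ℝ K := vertexCone_convex x hconv
  have hyK : y ∈ K := ⟨1, zero_le_one, y, hyC, by module⟩
  have hxK : x ∈ K := ⟨0, le_rfl, y, hyC, by simp⟩
  have hgC : ∀ c ∈ C, g c < g x := fun c hc => lt_of_le_of_lt (hg2 c hc) hgx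
  -- no nonzero horizontal direction with the whole ray from y inside K
  have horiz : ∀ u : X, g u = 0 → (∀ n : ℕ, y + (n : ℝ) • u ∈ K) → u = 0 := by
    intro u hgu hray
    by_contra hu0
    have hxu : x + u ∈ K := by
      rw [← hcone.closure_eq]
      refine mem_closure_of_tendsto (b := Filter.atTop)
        (f := fun n : ℕ => x + u + (1 / ((n : ℝ) + 1)) • (y - x))
        ?_ (Filter.Eventually.of_forall fun n => ?_)
      · have h1 : Filter.Tendsto (fun n : ℕ => (1 / ((n : ℝ) + 1)) • (y - x))
            Filter.atTop (nhds 0) := by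
          have := (tendsto_one_div_add_atTop_nhds_zero_nat (𝕜 := ℝ)).smul_const (y - x)
          simpa using this
        have := h1.const_add (x + u)
        simpa using this
      · have hm := vertexCone_scale x (hray (n + 1)) (l := 1 / ((n : ℝ) + 1))
          (by positivity)
        push_cast at hm
        have hne' : ((n : ℝ) + 1) ≠ 0 := by positivity
        have heq : x + (1 / ((n : ℝ) + 1)) • (y + ((n : ℝ) + 1) • u - x)
            = x + u + (1 / ((n : ℝ) + 1)) • (y - x) := by
          match_scalars <;> field_simp
        show x + u + (1 / ((n : ℝ) + 1)) • (y - x) ∈ K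
        rw [← heq]
        exact hm
    obtain ⟨t, ht, c, hc, heq⟩ := hxu
    have hu : u = t • (c - x) := add_left_cancel heq
    have ht0 : t ≠ 0 := by
      intro h
      rw [h, zero_smul] at hu
      exact hu0 hu
    have : g u = t * (g c - g x) := by
      rw [hu]; simp [mul_comm]
    rw [hgu] at this
    have : g c = g x := by
      have htpos : 0 < t := lt_of_le_of_ne ht (Ne.symm ht0)
      have := this.symm
      nlinarith [hgC c hc]
    exact absurd this (ne_of_lt (hgC c hc))
  -- a nonzero u with g u = 0
  obtain ⟨u, hgu, hu0⟩ : ∃ u : X, g u = 0 ∧ u ≠ 0 := by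
    have hrk := LinearMap.finrank_range_add_finrank_ker (g : X →ₗ[ℝ] ℝ)
    have hrle : Module.finrank ℝ (LinearMap.range (g : X →ₗ[ℝ] ℝ)) ≤ 1 := by
      have := Submodule.finrank_le (LinearMap.range (g : X →ₗ[ℝ] ℝ))
      simpa using this
    have hker : 1 ≤ Module.finrank ℝ (LinearMap.ker (g : X →ₗ[ℝ] ℝ)) := by omega
    have hne' : LinearMap.ker (g : X →ₗ[ℝ] ℝ) ≠ ⊥ := by
      intro h
      rw [h, finrank_bot] at hker
      omega
    obtain ⟨u, hu, hu0⟩ := (Submodule.ne_bot_iff _).mp hne'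
    exact ⟨u, hu, hu0⟩
  -- the sets {s | y + s • v ∈ K}
  have hsetconv : ∀ v : X, Convex ℝ {s : ℝ | y + s • v ∈ K} := by
    intro v s₁ hs₁ s₂ hs₂ a b ha hb hab
    have h2 : a • (y + s₁ • v) + b • (y + s₂ • v) = (a + b) • y + (a * s₁ + b * s₂) • v := by
      module
    have h3 := hKconv hs₁ hs₂ ha hb hab
    rw [h2, hab, one_smul] at h3
    exact h3
  have hset0 : ∀ v : X, (0 : ℝ) ∈ {s : ℝ | y + s • v ∈ K} := by
    intro v; simpa using hyK
  have hbdd : ∀ v : X, g v = 0 → v ≠ 0 → BddAbove {s : ℝ | y + s • v ∈ K} := by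
    intro v hgv hv0
    by_contra hb
    rw [not_bddAbove_iff] at hb
    refine hv0 (horiz v hgv fun n => ?_)
    obtain ⟨s, hs, hns⟩ := hb (n : ℝ)
    have := (hsetconv v).ordConnected.out (hset0 v) hs
      (Set.mem_Icc.mpr ⟨Nat.cast_nonneg n, le_of_lt hns⟩)
    exact this
  set I := {s : ℝ | y + s • u ∈ K} with hIdef
  have hIconv : Convex ℝ I := hsetconv u
  have hI0 : (0 : ℝ) ∈ I := hset0 u
  have hIclosed : IsClosed I := by
    have : Continuous fun s : ℝ => y + s • u := continuous_const.add (continuous_id.smul continuous_const)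
    exact hcone.preimage this
  have hIbddA : BddAbove I := hbdd u hgu hu0
  have hIbddB : BddBelow I := by
    obtain ⟨M, hM⟩ := hbdd (-u) (by simp [hgu]) (neg_ne_zero.mpr hu0)
    refine ⟨-M, fun s hs => ?_⟩
    have : -s ∈ {s : ℝ | y + s • (-u) ∈ K} := by
      simpa [hIdef] using hs
    have := hM this
    linarith
  set b := sSup I with hbdef
  set a := sInf I with hadef
  have hbI : b ∈ I := hIclosed.csSup_mem ⟨0, hI0⟩ hIbddA
  have haI : a ∈ I := hIclosed.csInf_mem ⟨0, hI0⟩ hIbddB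
  have h0b : 0 ≤ b := le_csSup hIbddA hI0
  have ha0 : a ≤ 0 := csInf_le hIbddB hI0
  -- frontier membership of the two endpoints
  have hfr : ∀ s : ℝ, s ∈ I → (∀ s', s' ∈ I → s' ≤ s) → y + s • u ∈ frontier K := by
    intro s hs hmax
    rw [hcone.frontier_eq]
    refine ⟨hs, fun hintmem => ?_⟩
    rw [mem_interior_iff_mem_nhds, Metric.mem_nhds_iff] at hintmem
    obtain ⟨ε, hε, hball⟩ := hintmem
    set s' := s + ε / (‖u‖ + 1) with hs'def
    have hs'I : s' ∈ I := by
      apply hball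
      rw [Metric.mem_ball, dist_eq_norm]
      have : y + s' • u - (y + s • u) = (ε / (‖u‖ + 1)) • u := by
        rw [hs'def]; module
      rw [this, norm_smul]
      have hn : 0 < ‖u‖ + 1 := by positivity
      rw [Real.norm_eq_abs, abs_of_pos (by positivity)]
      rw [div_mul_eq_mul_div, div_lt_iff₀ hn]
      nlinarith [norm_nonneg u]
    have h5 := hmax s' hs'I
    rw [hs'def] at h5
    have h6 : 0 < ε / (‖u‖ + 1) := by positivity
    linarith
  have hfra : ∀ s : ℝ, s ∈ I → (∀ s', s' ∈ I → s ≤ s') → y + s • u ∈ frontier K := by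
    intro s hs hmin
    rw [hcone.frontier_eq]
    refine ⟨hs, fun hintmem => ?_⟩
    rw [mem_interior_iff_mem_nhds, Metric.mem_nhds_iff] at hintmem
    obtain ⟨ε, hε, hball⟩ := hintmem
    set s' := s - ε / (‖u‖ + 1) with hs'def
    have hs'I : s' ∈ I := by
      apply hball
      rw [Metric.mem_ball, dist_eq_norm]
      have : y + s' • u - (y + s • u) = (-(ε / (‖u‖ + 1))) • u := by
        rw [hs'def]; module
      rw [this, norm_smul]
      have hn : 0 < ‖u‖ + 1 := by positivity
      rw [Real.norm_eq_abs, abs_neg, abs_of_pos (by positivity)]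
      rw [div_mul_eq_mul_div, div_lt_iff₀ hn]
      nlinarith [norm_nonneg u]
    have h5 := hmin s' hs'I
    rw [hs'def] at h5
    have h6 : 0 < ε / (‖u‖ + 1) := by positivity
    linarith
  have hwb : y + b • u ∈ frontier K := hfr b hbI fun s' hs' => le_csSup hIbddA hs'
  have hwa : y + a • u ∈ frontier K := hfra a haI fun s' hs' => csInf_le hIbddB hs'
  -- every frontier point of K at level g y is in the hull
  set Γhull := convexHull ℝ ((frontier (vertexCone x C) ∩ C) ∪ {x}) with hGdef
  have hB : ∀ w, w ∈ frontier K → g w = g y → w ∈ Γhull := by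
    intro w hwF hgw
    have hwK : w ∈ K := hcone.frontier_subset hwF
    obtain ⟨t, ht, c, hc, rfl⟩ := hwK
    have hgwc : g x + t * (g c - g x) = g y := by
      have : g (x + t • (c - x)) = g x + t * (g c - g x) := by simp [mul_comm]
      rw [← this, hgw]
    have ht0 : 0 < t := by
      rcases lt_or_eq_of_le ht with h | h
      · exact h
      · exfalso; rw [← h] at hgwc; simp at hgwc; linarith
    have ht1 : t ≤ 1 := by nlinarith [hgC c hc, hg2 c hc, ht0, hgx, hgwc]
    have hcF : c ∈ frontier K := by
      rw [hcone.frontier_eq]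
      refine ⟨⟨1, zero_le_one, c, hc, by module⟩, fun hcint => ?_⟩
      have hwint : x + t • (c - x) ∈ interior K := by
        have := hKconv.combo_interior_closure_mem_interior hcint
          (subset_closure hxK) ht0 (by linarith : (0:ℝ) ≤ 1 - t) (by ring)
        have heq : t • c + (1 - t) • x = x + t • (c - x) := by module
        rwa [heq] at this
      rw [hcone.frontier_eq] at hwF
      exact hwF.2 hwint
    have hxmem : x ∈ Γhull := subset_convexHull ℝ _ (Set.mem_union_right _ rfl)
    have hcmem : c ∈ Γhull := subset_convexHull ℝ _ (Set.mem_union_left _ ⟨hcF, hc⟩)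
    have heq : x + t • (c - x) = (1 - t) • x + t • c := by module
    rw [heq]
    exact (convex_convexHull ℝ _) hxmem hcmem (by linarith) ht (by ring)
  have hga : g (y + a • u) = g y := by simp [hgu]
  have hgb : g (y + b • u) = g y := by simp [hgu]
  have hwaH : y + a • u ∈ Γhull := hB _ hwa hga
  have hwbH : y + b • u ∈ Γhull := hB _ hwb hgb
  -- y is a convex combination of the two endpoints
  rcases eq_or_lt_of_le (le_trans ha0 h0b : a ≤ b) with hab | hab
  · have ha' : a = 0 := le_antisymm ha0 (hab ▸ h0b)
    have : y ∈ Γhull := by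
      have := hwaH
      rw [ha'] at this
      simpa using this
    exact hyNC this
  · set p := b / (b - a) with hpdef
    set q := -a / (b - a) with hqdef
    have hba : 0 < b - a := by linarith
    have hp : 0 ≤ p := div_nonneg h0b hba.le
    have hq : 0 ≤ q := div_nonneg (by linarith) hba.le
    have hpq : p + q = 1 := by rw [hpdef, hqdef, ← add_div]; rw [div_eq_one_iff_eq (by exact ne_of_gt hba)]; ring
    have hcombo : p • (y + a • u) + q • (y + b • u) = y := by
      have h1 : p * a + q * b = 0 := by
        rw [hpdef, hqdef]; field_simp; ring
      have h2 : p • (y + a • u) + q • (y + b • u)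
          = (p + q) • y + (p * a + q * b) • u := by module
      rw [h2, h1, hpq]; simp
    have : y ∈ Γhull := by
      rw [← hcombo]
      exact (convex_convexHull ℝ _) hwaH hwbH hp hq hpq
    exact hyNC this
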